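/- Let n ≥ 1 be an integer, and for a ≠ 0, b ∈ ℝ, define u_n(a,b,y) = |a|^{−1/2}·Ψ_n((y−b)/a), where Ψ_n is the Poisson wavelet. Define the differential operator D^{(n)}_{a,b} acting on smooth functions F(a,b) by D^{(n)}_{a,b}F = Σ_{k=1}^{n+1} binom(n+1, k)·(−1)^{k+1}·a^k·( a·∂^k F/(∂a ∂b^{k−1}) + ((2k−1)/2)·∂^{k−1}F/∂b^{k−1} ) + b·F. Then for all a ≠ 0, b ∈ ℝ and y ∈ ℝ with (y−b)/a > 0: D^{(n)}_{a,b} u_n(a,b,y) = y·u_n(a,b,y), the derivatives being taken with respect to the variables (a,b) at fixed y. -/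

import Mathlib

open Polynomial

/-- smooth extension polynomial -/
noncomputable def pwP (n : ℕ) : ℝ[X] :=
  C ((Nat.factorial n : ℝ))⁻¹ * (X - C (n : ℝ)) * X ^ (n - 1)

noncomputable def pwG (n : ℕ) : ℝ → ℝ := fun t => (pwP n).eval t * Real.exp (-t)

lemma pwG_eq (n : ℕ) (x : ℝ) :
    pwG n x = (x - n) / (Nat.factorial n) * x ^ (n - 1) * Real.exp (-x) := by
  simp only [pwG, pwP, eval_mul, eval_C, eval_sub, eval_X, eval_pow]
  ring

lemma pwP_natDegree_le (n : ℕ) (hn : 1 ≤ n) : (pwP n).natDegree ≤ n := by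
  unfold pwP
  calc (C ((Nat.factorial n : ℝ))⁻¹ * (X - C (n : ℝ)) * X ^ (n - 1)).natDegree
      ≤ (C ((Nat.factorial n : ℝ))⁻¹ * (X - C (n : ℝ))).natDegree + (X ^ (n-1) : ℝ[X]).natDegree :=
        natDegree_mul_le
    _ ≤ ((C ((Nat.factorial n : ℝ))⁻¹).natDegree + (X - C (n : ℝ)).natDegree) + (n - 1) := by
        gcongr
        · exact natDegree_mul_le
        · exact natDegree_X_pow_le _
    _ ≤ (0 + 1) + (n - 1) := by
        gcongr
        · exact le_of_eq (natDegree_C _)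
        · exact natDegree_X_sub_C_le _
    _ ≤ n := by omega

lemma hasDerivAt_evalExp (Q : ℝ[X]) (t : ℝ) :
    HasDerivAt (fun t => Q.eval t * Real.exp (-t))
      ((Q.derivative.eval t - Q.eval t) * Real.exp (-t)) t := by
  have h2 : HasDerivAt (fun t : ℝ => Real.exp (-t)) (-Real.exp (-t)) t := by
    simpa using (hasDerivAt_neg t).exp
  have := (Q.hasDerivAt t).mul h2
  refine this.congr_deriv ?_
  ring

noncomputable def psi (Q : ℝ[X]) : ℝ[X] := Q.derivative - Q

lemma iter_deriv_evalExp (Q : ℝ[X]) :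
    ∀ k, deriv^[k] (fun t => Q.eval t * Real.exp (-t))
      = fun t => (psi^[k] Q).eval t * Real.exp (-t) := by
  intro k
  induction k generalizing Q with
  | zero => rfl
  | succ k ih =>
    rw [Function.iterate_succ_apply, Function.iterate_succ_apply]
    have hd : deriv (fun t => Q.eval t * Real.exp (-t))
        = fun t => (psi Q).eval t * Real.exp (-t) := by
      funext t
      rw [(hasDerivAt_evalExp Q t).deriv]
      simp [psi]
    rw [hd, ih (psi Q)]

lemma iter_derivative_sub (m : ℕ) (p q : ℝ[X]) :
    (⇑(derivative (R := ℝ)))^[m] (p - q)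
      = (⇑(derivative (R := ℝ)))^[m] p - (⇑(derivative (R := ℝ)))^[m] q := by
  induction m generalizing p q with
  | zero => rfl
  | succ m ih =>
    rw [Function.iterate_succ_apply, Function.iterate_succ_apply,
      Function.iterate_succ_apply, derivative_sub, ih]

lemma psi_sum (m : ℕ) (Q : ℝ[X]) :
    ∑ k ∈ Finset.range (m + 1), (m.choose k) • psi^[k] Q
      = (⇑(derivative (R := ℝ)))^[m] Q := by
  induction m generalizing Q with
  | zero => simp
  | succ m ih =>
    rw [Finset.sum_range_succ']
    have hsplit : ∀ i ∈ Finset.range (m + 1),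
        ((m+1).choose (i+1)) • psi^[i+1] Q
          = (m.choose i) • psi^[i] (psi Q) + (m.choose (i+1)) • psi^[i+1] Q := by
      intro i _
      rw [Nat.choose_succ_succ, add_smul, Function.iterate_succ_apply]
    rw [Finset.sum_congr rfl hsplit, Finset.sum_add_distrib]
    have h2 : (∑ i ∈ Finset.range (m + 1), (m.choose (i+1)) • psi^[i+1] Q)
        + ((m+1).choose 0) • psi^[0] Q = (⇑(derivative (R := ℝ)))^[m] Q := by
      rw [Finset.sum_range_succ, Nat.choose_succ_self, zero_smul, add_zero,
        ← ih Q, Finset.sum_range_succ']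
      simp
    rw [add_assoc, h2, ih (psi Q)]
    rw [show psi Q = derivative Q - Q from rfl, iter_derivative_sub]
    rw [Function.iterate_succ_apply]
    abel

lemma key_sum (n : ℕ) (hn : 1 ≤ n) (t : ℝ) :
    ∑ k ∈ Finset.range (n + 2), ((n+1).choose k : ℝ) * deriv^[k] (pwG n) t = 0 := by
  have hG : ∀ k, deriv^[k] (pwG n) = fun t => (psi^[k] (pwP n)).eval t * Real.exp (-t) :=
    iter_deriv_evalExp (pwP n)
  have : ∑ k ∈ Finset.range (n + 2), ((n+1).choose k : ℝ) * deriv^[k] (pwG n) t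
      = (∑ k ∈ Finset.range (n + 2), ((n+1).choose k) • psi^[k] (pwP n)).eval t
          * Real.exp (-t) := by
    rw [Polynomial.eval_finset_sum, Finset.sum_mul]
    refine Finset.sum_congr rfl fun k _ => ?_
    rw [hG k]
    simp [nsmul_eq_mul]
    ring
  rw [this, psi_sum (n+1) (pwP n), Polynomial.iterate_derivative_eq_zero
      (lt_of_le_of_lt (pwP_natDegree_le n hn) (Nat.lt_succ_self n))]
  simp

lemma iter_deriv_congrOn {s : Set ℝ} (hs : IsOpen s) {f g : ℝ → ℝ}
    (h : ∀ x ∈ s, f x = g x) :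
    ∀ (k : ℕ), ∀ x ∈ s, deriv^[k] f x = deriv^[k] g x := by
  intro k
  induction k with
  | zero => exact h
  | succ k ih =>
    intro x hx
    rw [Function.iterate_succ_apply', Function.iterate_succ_apply']
    exact Filter.EventuallyEq.deriv_eq (Filter.eventuallyEq_of_mem (hs.mem_nhds hx) ih)

lemma hasDerivAt_iterG (n j : ℕ) (t : ℝ) :
    HasDerivAt (deriv^[j] (pwG n)) (deriv^[j+1] (pwG n) t) t := by
  have h0 := iter_deriv_evalExp (pwP n)
  have e : pwG n = fun t => (pwP n).eval t * Real.exp (-t) := rfl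
  rw [e, h0 j, h0 (j+1), Function.iterate_succ_apply']
  have := hasDerivAt_evalExp (psi^[j] (pwP n)) t
  convert this using 1
  simp [psi, sub_mul]


/-- The Poisson wavelet `Ψ_n(y) = ((y-n)/n!)·y^{n-1}·e^{-y}` for `y ≥ 0`, `0` for `y < 0`. -/
noncomputable def poissonWavelet (n : ℕ) (y : ℝ) : ℝ :=
  if 0 ≤ y then (y - n) / (Nat.factorial n) * y ^ (n - 1) * Real.exp (-y) else 0

/-- The kernel of the Poisson wavelet transform, `u_n(a,b,y) = |a|^{-1/2} Ψ_n((y-b)/a)`. -/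
noncomputable def poissonKernel' (n : ℕ) (a b y : ℝ) : ℝ :=
  (Real.sqrt |a|)⁻¹ * poissonWavelet n ((y - b) / a)

lemma pw_eq_pwG {n : ℕ} {x : ℝ} (hx : 0 < x) : poissonWavelet n x = pwG n x := by
  rw [poissonWavelet, if_pos hx.le, pwG_eq]

lemma hasDerivAt_invSqrtAbs {a : ℝ} (ha : a ≠ 0) :
    HasDerivAt (fun a' : ℝ => (Real.sqrt |a'|)⁻¹) (-(1/2) * (Real.sqrt |a|)⁻¹ / a) a := by
  rcases ha.lt_or_gt with h | h
  · have hna : (0:ℝ) < -a := by linarith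
    have hs : Real.sqrt (-a) ≠ 0 := by positivity
    have h1 : HasDerivAt (fun a' : ℝ => Real.sqrt (-a')) (1 / (2 * Real.sqrt (-a)) * (-1)) a := by
      have := (Real.hasDerivAt_sqrt hna.ne').comp a (hasDerivAt_neg a)
      exact this
    have h2 := h1.inv hs
    have h3 : HasDerivAt (fun a' : ℝ => (Real.sqrt |a'|)⁻¹)
        (-(1 / (2 * Real.sqrt (-a)) * (-1)) / Real.sqrt (-a) ^ 2) a := by
      apply h2.congr_of_eventuallyEq
      filter_upwards [Iio_mem_nhds h] with x hx
      rw [abs_of_neg hx]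
      rfl
    convert h3 using 1
    rw [abs_of_neg h, Real.sq_sqrt hna.le]
    field_simp
  · have hs : Real.sqrt a ≠ 0 := by positivity
    have h2 := (Real.hasDerivAt_sqrt h.ne').inv hs
    have h3 : HasDerivAt (fun a' : ℝ => (Real.sqrt |a'|)⁻¹)
        (-(1 / (2 * Real.sqrt a)) / Real.sqrt a ^ 2) a := by
      apply h2.congr_of_eventuallyEq
      filter_upwards [Ioi_mem_nhds h] with x hx
      rw [abs_of_pos hx]
      rfl
    convert h3 using 1
    rw [abs_of_pos h, Real.sq_sqrt h.le]
    field_simp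

lemma step_b (n j : ℕ) (a b y : ℝ) (ha : a ≠ 0) (hy : 0 < (y - b) / a) :
    deriv^[j] (fun b' => poissonKernel' n a b' y) b
      = (-1:ℝ)^j * ((a^j)⁻¹ * ((Real.sqrt |a|)⁻¹ * deriv^[j] (pwG n) ((y - b) / a))) := by
  -- first: transfer from wavelet to pwG on open set
  have hopen : IsOpen {b' : ℝ | 0 < (y - b') / a} := by
    have : {b' : ℝ | 0 < (y - b') / a} = (fun b' => (y - b') / a) ⁻¹' Set.Ioi 0 := rfl
    rw [this]
    exact (Continuous.div_const (by continuity) a).isOpen_preimage _ isOpen_Ioi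
  have htrans := iter_deriv_congrOn hopen
    (f := fun b' => poissonKernel' n a b' y)
    (g := fun b' => (Real.sqrt |a|)⁻¹ * pwG n ((y - b') / a))
    (fun x hx => by simp only [poissonKernel']; rw [pw_eq_pwG hx]) j b hy
  rw [htrans]
  -- iterated b-derivative of the smooth version, by induction
  clear htrans hy
  induction j generalizing b with
  | zero => simp
  | succ j ih =>
    rw [Function.iterate_succ_apply']
    have heq : deriv^[j] (fun b' => (Real.sqrt |a|)⁻¹ * pwG n ((y - b') / a))
        = fun b'' => (-1:ℝ)^j * ((a^j)⁻¹ * ((Real.sqrt |a|)⁻¹ * deriv^[j] (pwG n) ((y - b'') / a))) :=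
      funext fun b'' => ih b''
    rw [heq]
    have hinner : HasDerivAt (fun b'' : ℝ => (y - b'') / a) (-1 / a) b := by
      simpa using (((hasDerivAt_id b).const_sub y).div_const a)
    have hcomp := (hasDerivAt_iterG n j ((y - b)/a)).comp b hinner
    simp only [Function.comp_def] at hcomp
    have hfull := (HasDerivAt.const_mul ((Real.sqrt |a|)⁻¹) hcomp).const_mul ((a^j)⁻¹)
    have hfull2 := hfull.const_mul ((-1:ℝ)^j)
    rw [hfull2.deriv, pow_succ, pow_succ, mul_inv]
    ring

lemma hasDerivAt_invPow (j : ℕ) {a : ℝ} (ha : a ≠ 0) :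
    HasDerivAt (fun a' : ℝ => (a'^j)⁻¹) (-(j:ℝ) * (a^j)⁻¹ / a) a := by
  cases j with
  | zero => simpa using hasDerivAt_const a (1:ℝ)
  | succ m =>
    have h := (hasDerivAt_pow (m+1) a).inv (pow_ne_zero _ ha)
    refine h.congr_deriv ?_
    simp only [Nat.add_sub_cancel]
    field_simp
    ring

lemma step_a (n j : ℕ) (b y : ℝ) {a : ℝ} (ha : a ≠ 0) (hy : 0 < (y - b) / a) :
    deriv (fun a' => deriv^[j] (fun b' => poissonKernel' n a' b' y) b) a
      = ((-1:ℝ)^j * (-(j:ℝ) * (a^j)⁻¹ / a)) * ((Real.sqrt |a|)⁻¹ * deriv^[j] (pwG n) ((y-b)/a))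
        + ((-1:ℝ)^j * (a^j)⁻¹) * ((-(1/2) * (Real.sqrt |a|)⁻¹ / a) * deriv^[j] (pwG n) ((y-b)/a)
            + (Real.sqrt |a|)⁻¹ * (deriv^[j+1] (pwG n) ((y-b)/a) * (-((y - b) / (a*a))))) := by
  have hc : HasDerivAt (fun a' : ℝ => (-1:ℝ)^j * (a'^j)⁻¹)
      ((-1:ℝ)^j * (-(j:ℝ) * (a^j)⁻¹ / a)) a := (hasDerivAt_invPow j ha).const_mul _
  have hA := hasDerivAt_invSqrtAbs ha
  have hinv2 : HasDerivAt (fun a' : ℝ => (y - b)/a') (-((y - b) / (a*a))) a := by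
    have h := (hasDerivAt_inv ha).const_mul (y - b)
    simp only [div_eq_mul_inv]
    refine h.congr_deriv ?_
    rw [pow_two]
    ring
  have hQ : HasDerivAt (fun a' : ℝ => deriv^[j] (pwG n) ((y-b)/a'))
      (deriv^[j+1] (pwG n) ((y-b)/a) * (-((y - b) / (a*a)))) a := by
    have := (hasDerivAt_iterG n j ((y-b)/a)).comp a hinv2
    simpa [Function.comp_def] using this
  have hφ : HasDerivAt
      (fun a' : ℝ => (-1:ℝ)^j * (a'^j)⁻¹ * ((Real.sqrt |a'|)⁻¹ * deriv^[j] (pwG n) ((y-b)/a')))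
      (((-1:ℝ)^j * (-(j:ℝ) * (a^j)⁻¹ / a)) * ((Real.sqrt |a|)⁻¹ * deriv^[j] (pwG n) ((y-b)/a))
        + ((-1:ℝ)^j * (a^j)⁻¹) * ((-(1/2) * (Real.sqrt |a|)⁻¹ / a) * deriv^[j] (pwG n) ((y-b)/a)
            + (Real.sqrt |a|)⁻¹ * (deriv^[j+1] (pwG n) ((y-b)/a) * (-((y - b) / (a*a)))))) a :=
    hc.mul (hA.mul hQ)
  have hev : (fun a' => deriv^[j] (fun b' => poissonKernel' n a' b' y) b)
      =ᶠ[nhds a] (fun a' : ℝ =>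
        (-1:ℝ)^j * (a'^j)⁻¹ * ((Real.sqrt |a'|)⁻¹ * deriv^[j] (pwG n) ((y-b)/a'))) := by
    have hT : IsOpen {a' : ℝ | 0 < (y - b) * a'} :=
      isOpen_lt continuous_const (continuous_const.mul continuous_id)
    have haT : a ∈ {a' : ℝ | 0 < (y - b) * a'} := by
      rcases div_pos_iff.mp hy with ⟨h1, h2⟩ | ⟨h1, h2⟩
      · exact mul_pos h1 h2
      · exact mul_pos_of_neg_of_neg h1 h2
    filter_upwards [hT.mem_nhds haT] with a' ha'
    have ha'0 : a' ≠ 0 := by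
      rintro rfl
      simp at ha'
    have hy' : 0 < (y - b)/a' := by
      rcases mul_pos_iff.mp ha' with ⟨h1, h2⟩ | ⟨h1, h2⟩
      · exact div_pos h1 h2
      · exact div_pos_of_neg_of_neg h1 h2
    rw [step_b n j a' b y ha'0 hy']
    ring
  rw [hev.deriv_eq, hφ.deriv]


/-- The differential operator
`D^{(n)}_{a,b}F = ∑_{k=1}^{n+1} C(n+1,k)(-1)^{k+1} a^k (a·∂^kF/(∂a∂b^{k-1})
  + ((2k-1)/2)·∂^{k-1}F/∂b^{k-1}) + b·F`. -/
noncomputable def poissonOp (n : ℕ) (F : ℝ → ℝ → ℝ) (a b : ℝ) : ℝ :=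
  (∑ k ∈ Finset.Icc 1 (n + 1), ((n + 1).choose k : ℝ) * (-1 : ℝ) ^ (k + 1) * a ^ k *
    (a * deriv (fun a' => deriv^[k - 1] (fun b' => F a' b') b) a +
      (2 * (k : ℝ) - 1) / 2 * deriv^[k - 1] (fun b' => F a b') b)) + b * F a b

/-- The wavelet-transform kernel `u_n` is an eigenfunction of
`D^{(n)}_{a,b}`: `D^{(n)}_{a,b} u_n(a,b,y) = y·u_n(a,b,y)` whenever `(y-b)/a > 0`. -/
theorem statement_17 (n : ℕ) (hn : 1 ≤ n) (a b y : ℝ) (ha : a ≠ 0)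
    (hy : 0 < (y - b) / a) :
    poissonOp n (fun a' b' => poissonKernel' n a' b' y) a b =
      y * poissonKernel' n a b y := by
  have hterm : ∀ k ∈ Finset.Icc 1 (n+1),
      ((n + 1).choose k : ℝ) * (-1 : ℝ) ^ (k + 1) * a ^ k *
        (a * deriv (fun a' => deriv^[k - 1] (fun b' => poissonKernel' n a' b' y) b) a +
          (2 * (k : ℝ) - 1) / 2 * deriv^[k - 1] (fun b' => poissonKernel' n a b' y) b)
      = -(a * ((y-b)/a) * (Real.sqrt |a|)⁻¹)
          * (((n + 1).choose k : ℝ) * deriv^[k] (pwG n) ((y-b)/a)) := by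
    intro k hk
    obtain ⟨hk1, hk2⟩ := Finset.mem_Icc.mp hk
    obtain ⟨j, rfl⟩ : ∃ j, k = j + 1 := ⟨k - 1, by omega⟩
    simp only [Nat.add_sub_cancel]
    rw [step_a n j b y ha hy, step_b n j a b y ha hy]
    have e2 : (-1:ℝ)^(j+1+1) = (-1:ℝ)^j := by rw [pow_succ, pow_succ]; ring
    rw [e2]
    have hpj : (a:ℝ)^j ≠ 0 := pow_ne_zero j ha
    rcases Nat.even_or_odd j with hj | hj
    · rw [hj.neg_one_pow]
      push_cast
      field_simp
      ring
    · rw [hj.neg_one_pow]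
      push_cast
      field_simp
      ring
  simp only [poissonOp]
  rw [Finset.sum_congr rfl hterm]
  have hsum : (∑ k ∈ Finset.Icc 1 (n + 1), -(a * ((y-b)/a) * (Real.sqrt |a|)⁻¹)
        * (((n + 1).choose k : ℝ) * deriv^[k] (pwG n) ((y-b)/a)))
      = -(a * ((y-b)/a) * (Real.sqrt |a|)⁻¹) * (- pwG n ((y-b)/a)) := by
    rw [← Finset.mul_sum]
    congr 1
    have h0 := key_sum n hn ((y-b)/a)
    have hins : Finset.range (n+2) = insert 0 (Finset.Icc 1 (n+1)) := by
      ext x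
      simp only [Finset.mem_range, Finset.mem_insert, Finset.mem_Icc]
      omega
    rw [hins, Finset.sum_insert (by simp)] at h0
    simp only [Nat.choose_zero_right, Nat.cast_one, one_mul, Function.iterate_zero, id_eq] at h0
    linarith
  rw [hsum]
  have hker : poissonKernel' n a b y = (Real.sqrt |a|)⁻¹ * pwG n ((y-b)/a) := by
    simp only [poissonKernel']
    rw [pw_eq_pwG hy]
  rw [hker]
  have hab : a * ((y - b)/a) = y - b := by field_simp
  linear_combination ((Real.sqrt |a|)⁻¹ * pwG n ((y-b)/a)) * hab
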